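/- Let d and p be positive integers with p ≥ 2, let k ∈ ℕ, K > 0, and β₁, …, β_p ∈ [0, d/2). Let F : Conf_p → ℝ be a measurable function satisfying the factorized nearest neighbor bound |F(x₁, …, x_p)| ≤ K · ∏_{i=1}^p ⟨x_i⟩^{k} · ∏_{i=1}^p ( min_{j ≠ i} |x_i − x_j| )^{-β_i} for all (x₁, …, x_p) ∈ Conf_p. Then there exists a constant C > 0 such that for every measurable function f : ℝ^{pd} → ℝ with S(f) := sup_{x ∈ ℝ^{pd}} ⟨x⟩^{p(k+d+1)} |f(x)| < ∞, one has ∫_{Conf_p} |f(x₁, …, x_p)| · |F(x₁, …, x_p)| dx₁ ⋯ dx_p ≤ C · S(f) < ∞. In particular, every Schwartz function f on ℝ^{pd} is integrable against F on Conf_p. -/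

import Mathlib

open MeasureTheory

/-- The "inhomogeneous norm" (Japanese bracket) `⟨y⟩ = (1 + |y|²)^{1/2}`. -/
noncomputable def jb {n : ℕ} (y : EuclideanSpace ℝ (Fin n)) : ℝ :=
  (1 + ‖y‖ ^ 2) ^ ((1 : ℝ) / 2)

/-- The nearest-neighbor distance `min_{j ≠ i} |x_i − x_j|`. -/
noncomputable def nnd {d p : ℕ} (x : Fin p → EuclideanSpace ℝ (Fin d)) (i : Fin p) : ℝ :=
  sInf {r : ℝ | ∃ j : Fin p, j ≠ i ∧ r = ‖x i - x j‖}

open Finset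
open scoped ENNReal

noncomputable def Hf (γ u : ℝ) : ℝ≥0∞ := ENNReal.ofReal (if u ≤ 1 then u ^ (-γ) else 1)
noncomputable def Sf (γ u : ℝ) : ℝ≥0∞ := ENNReal.ofReal (if u ≤ 1 then u ^ (-γ) else 0)
noncomputable def Wf {d : ℕ} (y : EuclideanSpace ℝ (Fin d)) : ℝ≥0∞ :=
  ENNReal.ofReal (jb y ^ (-((d:ℝ)+1)))
noncomputable def Mconst (d : ℕ) : ℝ≥0∞ := ∫⁻ y : EuclideanSpace ℝ (Fin d), Wf y
noncomputable def ISconst (d : ℕ) (γ : ℝ) : ℝ≥0∞ := ∫⁻ y : EuclideanSpace ℝ (Fin d), Sf γ ‖y‖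
noncomputable def Bconst (d p : ℕ) (β : Fin p → ℝ) : ℝ≥0∞ :=
  3 * Mconst d + ∑ i : Fin p, ISconst d (2 * β i)

lemma measurable_Hf (γ : ℝ) : Measurable (Hf γ) := by
  unfold Hf
  apply ENNReal.measurable_ofReal.comp
  exact Measurable.ite (measurableSet_le measurable_id measurable_const)
    (by measurability) measurable_const

lemma measurable_Sf (γ : ℝ) : Measurable (Sf γ) := by
  unfold Sf
  apply ENNReal.measurable_ofReal.comp
  exact Measurable.ite (measurableSet_le measurable_id measurable_const)
    (by measurability) measurable_const

lemma measurable_Wf {d : ℕ} : Measurable (Wf (d := d)) := by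
  unfold Wf jb
  apply ENNReal.measurable_ofReal.comp
  fun_prop

lemma one_le_jb {d : ℕ} (y : EuclideanSpace ℝ (Fin d)) : 1 ≤ jb y :=
  Real.one_le_rpow (by nlinarith [sq_nonneg ‖y‖]) (by norm_num)

lemma jb_pos {d : ℕ} (y : EuclideanSpace ℝ (Fin d)) : 0 < jb y :=
  lt_of_lt_of_le one_pos (one_le_jb y)

lemma Wf_le_one {d : ℕ} (y : EuclideanSpace ℝ (Fin d)) : Wf y ≤ 1 := by
  unfold Wf
  rw [show (1:ℝ≥0∞) = ENNReal.ofReal 1 by simp]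
  apply ENNReal.ofReal_le_ofReal
  exact Real.rpow_le_one_of_one_le_of_nonpos (one_le_jb y) (neg_nonpos.mpr (by positivity))

lemma Hf_le_Hf_two {γ u : ℝ} (hγ : 0 ≤ γ) (hu : 0 ≤ u) : Hf γ u ≤ Hf (2*γ) u := by
  unfold Hf
  apply ENNReal.ofReal_le_ofReal
  by_cases h : u ≤ 1
  · simp only [h, if_true]
    rcases eq_or_lt_of_le hu with h0 | h0
    · rcases eq_or_lt_of_le hγ with hg0 | hg0
      · simp [← hg0]
      · rw [← h0, Real.zero_rpow (by linarith), Real.zero_rpow (by linarith)]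
    · exact Real.rpow_le_rpow_of_exponent_ge h0 h (by linarith)
  · simp [h]

lemma Hf_mul_Hf {γ u : ℝ} (hγ : 0 ≤ γ) (hu : 0 ≤ u) : Hf γ u * Hf γ u = Hf (2*γ) u := by
  unfold Hf
  rw [← ENNReal.ofReal_mul (by positivity)]
  congr 1
  by_cases h : u ≤ 1
  · simp only [h, if_true]
    rcases eq_or_lt_of_le hu with h0 | h0
    · rcases eq_or_lt_of_le hγ with hg0 | hg0
      · simp [← hg0]
      · rw [← h0, Real.zero_rpow (by linarith), Real.zero_rpow (by linarith), mul_zero]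
    · rw [← Real.rpow_add h0]; ring_nf
  · simp [h]

lemma mul_le_sq_add (a b : ℝ≥0∞) : a * b ≤ a*a + b*b := by
  rcases le_total a b with h | h
  · exact le_add_left (mul_le_mul_left h b)
  · exact le_add_right (mul_le_mul_right h a)

lemma Hf_mul_le {γ₁ γ₂ u v : ℝ} (h1 : 0 ≤ γ₁) (h2 : 0 ≤ γ₂) (hu : 0 ≤ u) (hv : 0 ≤ v) :
    Hf γ₁ u * Hf γ₂ v ≤ Hf (2*γ₁) u + Hf (2*γ₂) v := by
  calc Hf γ₁ u * Hf γ₂ v ≤ Hf γ₁ u * Hf γ₁ u + Hf γ₂ v * Hf γ₂ v := mul_le_sq_add _ _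
  _ = _ := by rw [Hf_mul_Hf h1 hu, Hf_mul_Hf h2 hv]

lemma Hf_le_Sf_add_one (γ u : ℝ) : Hf γ u ≤ Sf γ u + 1 := by
  unfold Hf Sf
  by_cases h : u ≤ 1
  · simp only [h, if_true]; exact le_add_right le_rfl
  · simp [h]

lemma Mconst_lt_top (d : ℕ) : Mconst d < ⊤ := by
  have hi : Integrable (fun y : EuclideanSpace ℝ (Fin d) =>
      ((1:ℝ) + ‖y‖ ^ 2) ^ (-((d:ℝ)+1) / 2)) volume :=
    integrable_rpow_neg_one_add_norm_sq (by rw [finrank_euclideanSpace_fin]; linarith)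
  have h2 := hi.2
  rw [HasFiniteIntegral] at h2
  unfold Mconst Wf jb
  refine lt_of_le_of_lt (le_of_eq (lintegral_congr fun y => ?_)) h2
  have h0 : (0:ℝ) ≤ 1 + ‖y‖^2 := by positivity
  rw [Real.enorm_eq_ofReal (Real.rpow_nonneg h0 _)]
  rw [← Real.rpow_mul h0]
  congr 1
  ring


lemma ISconst_lt_top (d : ℕ) (hd : 0 < d) {γ : ℝ} (hγ0 : 0 ≤ γ) (hγ : γ < d) :
    ISconst d γ < ⊤ := by
  classical
  haveI : Nontrivial (EuclideanSpace ℝ (Fin d)) := Module.nontrivial_of_finrank_pos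
    (R := ℝ) (by rw [finrank_euclideanSpace_fin]; exact hd)
  set c : ℝ := 1/2 with hc
  have hc0 : (0:ℝ) < c := by norm_num
  have hc1 : c < 1 := by norm_num
  set sh : ℕ → Set (EuclideanSpace ℝ (Fin d)) :=
    fun n => {y | c^(n+1) < ‖y‖ ∧ ‖y‖ ≤ c^n} with hsh
  set bigS : Set (EuclideanSpace ℝ (Fin d)) := {y | 1 < ‖y‖} with hbigS
  have hcover : (Set.univ : Set (EuclideanSpace ℝ (Fin d))) ⊆ (bigS ∪ {0}) ∪ ⋃ n, sh n := by
    intro y _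
    by_cases h1 : ‖y‖ ≤ 1
    · by_cases h0 : y = 0
      · exact Or.inl (Or.inr (by simp [h0]))
      · have hy0 : 0 < ‖y‖ := norm_pos_iff.mpr h0
        have hex : ∃ m, c ^ m < ‖y‖ := exists_pow_lt_of_lt_one hy0 hc1
        have hn0 : Nat.find hex ≠ 0 := by
          intro h
          have := Nat.find_spec hex
          rw [h] at this
          simp at this; linarith
        obtain ⟨m, hm⟩ := Nat.exists_eq_succ_of_ne_zero hn0
        refine Or.inr (Set.mem_iUnion.mpr ⟨m, ?_, ?_⟩)
        · have := Nat.find_spec hex; rwa [hm] at this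
        · have := Nat.find_min hex (m := m) (by omega); exact not_lt.mp this
    · exact Or.inl (Or.inl (not_le.mp h1))
  have hmsh : ∀ n, MeasurableSet (sh n) := fun n =>
    (measurableSet_lt measurable_const measurable_norm).inter
      (measurableSet_le measurable_norm measurable_const)
  have hV : volume (Metric.ball (0 : EuclideanSpace ℝ (Fin d)) 1) < ⊤ := measure_ball_lt_top
  set V := volume (Metric.ball (0 : EuclideanSpace ℝ (Fin d)) 1) with hVdef
  set q : ℝ := c ^ ((d:ℝ) - γ) with hq
  have hq0 : 0 ≤ q := by rw [hq]; positivity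
  set r : ℝ≥0∞ := ENNReal.ofReal q with hr
  have hrlt : r < 1 := by
    rw [hr, ← ENNReal.ofReal_one]
    exact ENNReal.ofReal_lt_ofReal_iff_of_nonneg hq0 |>.mpr
      (Real.rpow_lt_one hc0.le hc1 (by linarith))
  calc ISconst d γ = ∫⁻ y in (Set.univ : Set (EuclideanSpace ℝ (Fin d))), Sf γ ‖y‖ :=
        (setLIntegral_univ _).symm
    _ ≤ ∫⁻ y in ((bigS ∪ {0}) ∪ ⋃ n, sh n), Sf γ ‖y‖ := lintegral_mono_set hcover
    _ ≤ (∫⁻ y in (bigS ∪ {0}), Sf γ ‖y‖) + ∫⁻ y in ⋃ n, sh n, Sf γ ‖y‖ :=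
        lintegral_union_le _ _ _
    _ ≤ ((∫⁻ y in bigS, Sf γ ‖y‖) + ∫⁻ y in ({0} : Set (EuclideanSpace ℝ (Fin d))), Sf γ ‖y‖)
          + ∑' n, ∫⁻ y in sh n, Sf γ ‖y‖ :=
        add_le_add (lintegral_union_le _ _ _) (lintegral_iUnion_le _ _)
    _ ≤ (0 + 0) + ∑' n, ∫⁻ y in sh n, Sf γ ‖y‖ := by
        gcongr
        · refine le_of_eq ?_
          rw [setLIntegral_congr_fun (measurableSet_lt measurable_const measurable_norm)
            (fun y hy => ?_), lintegral_zero]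
          show Sf γ ‖y‖ = 0
          unfold Sf
          rw [if_neg (not_le.mpr hy)]; simp
        · exact le_of_eq (setLIntegral_measure_zero _ _ (measure_singleton 0))
    _ = ∑' n, ∫⁻ y in sh n, Sf γ ‖y‖ := by simp
    _ ≤ ∑' n, (ENNReal.ofReal ((c^(n+1) : ℝ) ^ (-γ)) * (ENNReal.ofReal ((c^n : ℝ)^d) * V)) := by
        refine ENNReal.tsum_le_tsum fun n => ?_
        have hb : ∫⁻ y in sh n, Sf γ ‖y‖
            ≤ ∫⁻ _ in sh n, ENNReal.ofReal ((c^(n+1) : ℝ) ^ (-γ)) := by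
          refine setLIntegral_mono' (hmsh n) fun y hy => ?_
          unfold Sf
          have h1 : ‖y‖ ≤ 1 := le_trans hy.2 (pow_le_one₀ hc0.le hc1.le)
          rw [if_pos h1]
          exact ENNReal.ofReal_le_ofReal
            (Real.rpow_le_rpow_of_nonpos (by positivity) hy.1.le (by linarith))
        refine hb.trans ?_
        rw [setLIntegral_const]
        gcongr
        have hsub : sh n ⊆ Metric.closedBall (0 : EuclideanSpace ℝ (Fin d)) (c^n) := fun y hy => by
          rw [Metric.mem_closedBall, dist_zero_right]; exact hy.2
        refine (measure_mono hsub).trans ?_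
        rw [Measure.addHaar_closedBall volume (0 : EuclideanSpace ℝ (Fin d)) (by positivity)]
        rw [finrank_euclideanSpace_fin]
    _ = ENNReal.ofReal (c ^ (-γ)) * V * ∑' n, r^n := by
        rw [← ENNReal.tsum_mul_left]
        refine tsum_congr fun n => ?_
        have e1 : ((c^(n+1) : ℝ) ^ (-γ)) * ((c^n : ℝ)^d) = c ^ (-γ) * q^(n:ℕ) := by
          rw [hq, ← Real.rpow_natCast c (n+1), ← Real.rpow_natCast c n,
            ← Real.rpow_mul hc0.le, ← Real.rpow_natCast (c ^ ((n:ℝ))) d,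
            ← Real.rpow_mul hc0.le, ← Real.rpow_natCast (c ^ ((d:ℝ) - γ)) n,
            ← Real.rpow_mul hc0.le, ← Real.rpow_add hc0, ← Real.rpow_add hc0]
          congr 1
          push_cast
          ring
        calc ENNReal.ofReal ((c^(n+1) : ℝ) ^ (-γ)) * (ENNReal.ofReal ((c^n : ℝ)^d) * V)
            = ENNReal.ofReal (((c^(n+1) : ℝ) ^ (-γ)) * ((c^n : ℝ)^d)) * V := by
              rw [ENNReal.ofReal_mul (by positivity)]; ring
          _ = ENNReal.ofReal (c ^ (-γ)) * (ENNReal.ofReal (q^(n:ℕ))) * V := by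
              rw [e1, ENNReal.ofReal_mul (by positivity)]
          _ = ENNReal.ofReal (c ^ (-γ)) * V * r^n := by
              rw [hr, ENNReal.ofReal_pow hq0]; ring
    _ < ⊤ := by
        refine ENNReal.mul_lt_top (ENNReal.mul_lt_top ENNReal.ofReal_lt_top hV) ?_
        rw [ENNReal.tsum_geometric]
        exact ENNReal.inv_lt_top.mpr (tsub_pos_iff_lt.mpr hrlt)

lemma measurable_Hf_norm {d : ℕ} (γ : ℝ) (a : EuclideanSpace ℝ (Fin d)) :
    Measurable fun t : EuclideanSpace ℝ (Fin d) => Hf γ ‖t - a‖ :=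
  (measurable_Hf γ).comp ((measurable_id.sub_const a).norm)

lemma lintegral_Hf_mul_Wf_le {d : ℕ} (γ : ℝ) (a : EuclideanSpace ℝ (Fin d)) :
    ∫⁻ t : EuclideanSpace ℝ (Fin d), Hf γ ‖t - a‖ * Wf t ≤ ISconst d γ + Mconst d := by
  have step1 : ∫⁻ t : EuclideanSpace ℝ (Fin d), Hf γ ‖t - a‖ * Wf t
      ≤ ∫⁻ t : EuclideanSpace ℝ (Fin d), (Sf γ ‖t - a‖ + Wf t) := by
    refine lintegral_mono fun t => ?_
    calc Hf γ ‖t - a‖ * Wf t ≤ (Sf γ ‖t - a‖ + 1) * Wf t :=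
          mul_le_mul_left (Hf_le_Sf_add_one _ _) _
      _ = Sf γ ‖t - a‖ * Wf t + Wf t := by ring
      _ ≤ Sf γ ‖t - a‖ * 1 + Wf t := by gcongr; exact Wf_le_one t
      _ = Sf γ ‖t - a‖ + Wf t := by rw [mul_one]
  refine step1.trans ?_
  have hm : Measurable fun t : EuclideanSpace ℝ (Fin d) => Sf γ ‖t - a‖ :=
    (measurable_Sf γ).comp ((measurable_id.sub_const a).norm)
  rw [lintegral_add_left hm]
  have htrans : ∫⁻ t : EuclideanSpace ℝ (Fin d), Sf γ ‖t - a‖ = ISconst d γ := by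
    unfold ISconst
    have := lintegral_add_right_eq_self (μ := volume)
      (fun z : EuclideanSpace ℝ (Fin d) => Sf γ ‖z‖) (-a)
    simp only [← sub_eq_add_neg] at this
    exact this
  rw [htrans]
  rfl

lemma prod_Hf2_le {p : ℕ} (β : Fin p → ℝ) (hβ0 : ∀ i, 0 ≤ β i) (s : Finset (Fin p))
    (hs : s.card ≤ 2) (u : Fin p → ℝ) (hu : ∀ i, 0 ≤ u i) :
    ∏ i ∈ s, Hf (β i) (u i) ≤ 1 + ∑ i ∈ s, Hf (2 * β i) (u i) := by
  rcases (by omega : s.card = 0 ∨ s.card = 1 ∨ s.card = 2) with h|h|h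
  · rw [Finset.card_eq_zero] at h
    subst h; simp
  · obtain ⟨i, rfl⟩ := Finset.card_eq_one.mp h
    rw [prod_singleton, sum_singleton]
    exact le_add_left (Hf_le_Hf_two (hβ0 i) (hu i))
  · obtain ⟨i, j, hij, rfl⟩ := Finset.card_eq_two.mp h
    rw [prod_pair hij, sum_pair hij]
    exact le_add_left (Hf_mul_le (hβ0 i) (hβ0 j) (hu i) (hu j))

lemma int_prod_Hf_le {d p : ℕ} (β : Fin p → ℝ) (hβ0 : ∀ i, 0 ≤ β i)
    (s : Finset (Fin p)) (hs : s.card ≤ 2) (a : Fin p → EuclideanSpace ℝ (Fin d)) :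
    ∫⁻ t : EuclideanSpace ℝ (Fin d), (∏ i ∈ s, Hf (β i) ‖t - a i‖) * Wf t
      ≤ Bconst d p β := by
  have step1 : ∫⁻ t : EuclideanSpace ℝ (Fin d), (∏ i ∈ s, Hf (β i) ‖t - a i‖) * Wf t
      ≤ ∫⁻ t : EuclideanSpace ℝ (Fin d),
          (Wf t + ∑ i ∈ s, Hf (2 * β i) ‖t - a i‖ * Wf t) := by
    refine lintegral_mono fun t => ?_
    calc (∏ i ∈ s, Hf (β i) ‖t - a i‖) * Wf t
        ≤ (1 + ∑ i ∈ s, Hf (2 * β i) ‖t - a i‖) * Wf t :=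
          mul_le_mul_left (prod_Hf2_le β hβ0 s hs _ (fun i => norm_nonneg _)) _
      _ = Wf t + ∑ i ∈ s, Hf (2 * β i) ‖t - a i‖ * Wf t := by
          rw [add_mul, one_mul, Finset.sum_mul]
  refine step1.trans ?_
  rw [lintegral_add_left measurable_Wf, lintegral_finset_sum' s (f := fun i t => Hf (2 * β i) ‖t - a i‖ * Wf t)
    (fun i _ => ((measurable_Hf_norm (2 * β i) (a i)).mul measurable_Wf).aemeasurable)]
  have hM : (∫⁻ t : EuclideanSpace ℝ (Fin d), Wf t) = Mconst d := rfl
  rw [hM]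
  have hsum : ∑ i ∈ s, ∫⁻ t : EuclideanSpace ℝ (Fin d), Hf (2 * β i) ‖t - a i‖ * Wf t
      ≤ ∑ i ∈ s, (ISconst d (2 * β i) + Mconst d) :=
    Finset.sum_le_sum fun i _ => lintegral_Hf_mul_Wf_le _ _
  refine (add_le_add_right hsum _).trans ?_
  rw [Finset.sum_add_distrib, Finset.sum_const]
  unfold Bconst
  have h1 : ∑ i ∈ s, ISconst d (2 * β i) ≤ ∑ i : Fin p, ISconst d (2 * β i) :=
    Finset.sum_le_sum_of_subset (Finset.subset_univ s)
  have h2 : s.card • Mconst d ≤ 2 * Mconst d := by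
    rw [nsmul_eq_mul]
    exact mul_le_mul_left (by exact_mod_cast Nat.cast_le.mpr hs) _
  calc Mconst d + (∑ i ∈ s, ISconst d (2 * β i) + s.card • Mconst d)
      ≤ Mconst d + (∑ i : Fin p, ISconst d (2 * β i) + 2 * Mconst d) := by gcongr
    _ = 3 * Mconst d + ∑ i : Fin p, ISconst d (2 * β i) := by ring

lemma Hf_ne_top (γ u : ℝ) : Hf γ u ≠ ⊤ := ENNReal.ofReal_ne_top

lemma measurable_integrand {d p : ℕ} (β : Fin p → ℝ) (σ : Fin p → Fin p)
    (A Ed' : Finset (Fin p)) :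
    Measurable (fun y : Fin p → EuclideanSpace ℝ (Fin d) =>
      (∏ i ∈ Ed', Hf (β i) ‖y i - y (σ i)‖) * ∏ i ∈ A, Wf (y i)) := by
  refine Measurable.mul ?_ ?_
  · refine Finset.measurable_prod _ fun i _ => ?_
    exact (measurable_Hf (β i)).comp
      (((measurable_pi_apply i).sub (measurable_pi_apply (σ i))).norm)
  · exact Finset.measurable_prod _ fun i _ => measurable_Wf.comp (measurable_pi_apply i)

lemma marg_le {d p : ℕ} (β : Fin p → ℝ) (hβ0 : ∀ i, 0 ≤ β i)
    (hB : Bconst d p β ≠ ⊤) (σ : Fin p → Fin p) (hσ : ∀ i, σ i ≠ i) :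
    ∀ (n : ℕ) (A Ed' : Finset (Fin p)), A.card = n → Ed' ⊆ A →
    ∀ x : Fin p → EuclideanSpace ℝ (Fin d),
    (∫⋯∫⁻_A, (fun y => (∏ i ∈ Ed', Hf (β i) ‖y i - y (σ i)‖) * ∏ i ∈ A, Wf (y i))
        ∂(fun _ => (volume : Measure (EuclideanSpace ℝ (Fin d))))) x
      ≤ (Bconst d p β) ^ n := by
  intro n
  induction n with
  | zero =>
    intro A Ed' hcard hsub x
    rw [Finset.card_eq_zero] at hcard
    subst hcard
    rw [Finset.subset_empty] at hsub
    subst hsub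
    simp [lmarginal_empty]
  | succ n ih =>
    intro A Ed' hcard hsub x
    classical
    -- find a vertex of degree ≤ 2
    have hdeg : ∃ v ∈ A, (Ed'.filter (fun i => i = v ∨ σ i = v)).card ≤ 2 := by
      by_contra hcon
      push_neg at hcon
      have hup : ∑ v ∈ A, (Ed'.filter (fun i => i = v ∨ σ i = v)).card ≤ 2 * A.card := by
        calc ∑ v ∈ A, (Ed'.filter (fun i => i = v ∨ σ i = v)).card
            = ∑ v ∈ A, ∑ i ∈ Ed', if i = v ∨ σ i = v then 1 else 0 := by
              refine Finset.sum_congr rfl fun v _ => ?_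
              rw [Finset.card_filter]
          _ = ∑ i ∈ Ed', ∑ v ∈ A, if i = v ∨ σ i = v then 1 else 0 := Finset.sum_comm
          _ ≤ ∑ _i ∈ Ed', 2 := by
              refine Finset.sum_le_sum fun i _ => ?_
              rw [← Finset.card_filter]
              have hss : (A.filter (fun v => i = v ∨ σ i = v)) ⊆ insert i {σ i} := by
                intro v hv
                rcases (Finset.mem_filter.mp hv).2 with h | h
                · exact Finset.mem_insert.mpr (Or.inl h.symm)
                · exact Finset.mem_insert.mpr (Or.inr (by simp [h.symm]))
              exact le_trans (Finset.card_le_card hss)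
                (le_trans (Finset.card_insert_le i {σ i}) (by simp))
          _ = 2 * Ed'.card := by rw [Finset.sum_const, smul_eq_mul, mul_comm]
          _ ≤ 2 * A.card := Nat.mul_le_mul_left 2 (Finset.card_le_card hsub)
      have hlow : 3 * A.card ≤ ∑ v ∈ A, (Ed'.filter (fun i => i = v ∨ σ i = v)).card := by
        calc 3 * A.card = ∑ _v ∈ A, 3 := by rw [Finset.sum_const, smul_eq_mul, mul_comm]
          _ ≤ _ := Finset.sum_le_sum fun v hv => hcon v hv
      omega
    obtain ⟨v, hv, hdv⟩ := hdeg
    set Iv := Ed'.filter (fun i => i = v ∨ σ i = v) with hIv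
    set Ed'' := Ed'.filter (fun i => ¬(i = v ∨ σ i = v)) with hEd''
    have hfmeas := measurable_integrand (d := d) β σ A Ed'
    rw [lmarginal_erase' _ hfmeas hv]
    -- the inner integral bound
    have hinner : ∀ z : Fin p → EuclideanSpace ℝ (Fin d),
        (∫⁻ t, (fun y => (∏ i ∈ Ed', Hf (β i) ‖y i - y (σ i)‖) * ∏ i ∈ A, Wf (y i))
            (Function.update z v t))
          ≤ Bconst d p β *
            ((∏ i ∈ Ed'', Hf (β i) ‖z i - z (σ i)‖) * ∏ i ∈ A.erase v, Wf (z i)) := by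
      intro z
      set aa : Fin p → EuclideanSpace ℝ (Fin d) := fun i => if i = v then z (σ v) else z i
        with haa
      set G : ℝ≥0∞ := (∏ i ∈ Ed'', Hf (β i) ‖z i - z (σ i)‖) * ∏ i ∈ A.erase v, Wf (z i)
        with hG
      have hGne : G ≠ ⊤ := by
        rw [hG]
        refine ENNReal.mul_ne_top ?_ ?_
        · exact (ENNReal.prod_lt_top (fun i _ => lt_of_le_of_ne le_top (Hf_ne_top _ _))).ne
        · exact (ENNReal.prod_lt_top (fun i _ =>
            lt_of_le_of_lt (Wf_le_one _) ENNReal.one_lt_top)).ne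
      have hsplit : ∀ t, (∏ i ∈ Ed', Hf (β i) ‖(Function.update z v t) i -
            (Function.update z v t) (σ i)‖) * ∏ i ∈ A, Wf ((Function.update z v t) i)
          = ((∏ i ∈ Iv, Hf (β i) ‖t - aa i‖) * Wf t) * G := by
        intro t
        have e1 : ∏ i ∈ Ed', Hf (β i) ‖(Function.update z v t) i -
            (Function.update z v t) (σ i)‖
            = (∏ i ∈ Iv, Hf (β i) ‖t - aa i‖) *
              ∏ i ∈ Ed'', Hf (β i) ‖z i - z (σ i)‖ := by
          rw [← Finset.prod_filter_mul_prod_filter_not Ed' (fun i => i = v ∨ σ i = v)]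
          congr 1
          · refine Finset.prod_congr rfl fun i hi => ?_
            rcases (Finset.mem_filter.mp hi).2 with h | h
            · subst h
              have h1 : Function.update z i t i = t := Function.update_self i t z
              have h2 : Function.update z i t (σ i) = z (σ i) :=
                Function.update_of_ne (hσ i) t z
              rw [h1, h2, haa]
              simp
            · have hiv : i ≠ v := fun hc => hσ i (h.trans hc.symm)
              have h1 : Function.update z v t i = z i := Function.update_of_ne hiv t z
              have h2 : Function.update z v t (σ i) = t := by
                rw [h]; exact Function.update_self v t z
              rw [h1, h2, haa]
              simp only [if_neg hiv]
              rw [norm_sub_rev]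
          · refine Finset.prod_congr rfl fun i hi => ?_
            have hni := (Finset.mem_filter.mp hi).2
            push_neg at hni
            rw [Function.update_of_ne hni.1, Function.update_of_ne hni.2]
        have e2 : ∏ i ∈ A, Wf ((Function.update z v t) i)
            = Wf t * ∏ i ∈ A.erase v, Wf (z i) := by
          rw [← Finset.mul_prod_erase A _ hv, Function.update_self]
          congr 1
          refine Finset.prod_congr rfl fun i hi => ?_
          rw [Function.update_of_ne (Finset.mem_erase.mp hi).1]
        rw [e1, e2, hG]
        ring
      calc (∫⁻ t, (fun y => (∏ i ∈ Ed', Hf (β i) ‖y i - y (σ i)‖) * ∏ i ∈ A, Wf (y i))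
            (Function.update z v t))
          = ∫⁻ t, ((∏ i ∈ Iv, Hf (β i) ‖t - aa i‖) * Wf t) * G := by
            refine lintegral_congr fun t => ?_
            exact hsplit t
        _ = (∫⁻ t, (∏ i ∈ Iv, Hf (β i) ‖t - aa i‖) * Wf t) * G :=
            lintegral_mul_const' G _ hGne
        _ ≤ Bconst d p β * G :=
            mul_le_mul_left (int_prod_Hf_le β hβ0 Iv hdv aa) G
    -- apply monotonicity and induction
    calc (∫⋯∫⁻_A.erase v, (fun z => ∫⁻ t, (fun y =>
            (∏ i ∈ Ed', Hf (β i) ‖y i - y (σ i)‖) * ∏ i ∈ A, Wf (y i))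
            (Function.update z v t))
          ∂(fun _ => (volume : Measure (EuclideanSpace ℝ (Fin d))))) x
        ≤ (∫⋯∫⁻_A.erase v, (fun z => Bconst d p β *
            ((∏ i ∈ Ed'', Hf (β i) ‖z i - z (σ i)‖) * ∏ i ∈ A.erase v, Wf (z i)))
          ∂(fun _ => (volume : Measure (EuclideanSpace ℝ (Fin d))))) x :=
          lmarginal_mono (fun z => hinner z) x
      _ = Bconst d p β * (∫⋯∫⁻_A.erase v, (fun z =>
            (∏ i ∈ Ed'', Hf (β i) ‖z i - z (σ i)‖) * ∏ i ∈ A.erase v, Wf (z i))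
          ∂(fun _ => (volume : Measure (EuclideanSpace ℝ (Fin d))))) x := by
          simp only [MeasureTheory.lmarginal]
          rw [lintegral_const_mul' _ _ hB]
      _ ≤ Bconst d p β * (Bconst d p β) ^ n := by
          refine mul_le_mul_right ?_ _
          refine ih (A.erase v) Ed'' ?_ ?_ x
          · rw [Finset.card_erase_of_mem hv, hcard]
            omega
          · intro i hi
            have h1 := Finset.mem_filter.mp hi
            have h2 := h1.2
            push_neg at h2
            exact Finset.mem_erase.mpr ⟨h2.1, hsub h1.1⟩
      _ = (Bconst d p β) ^ (n+1) := by rw [pow_succ]; ring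

lemma int_le_Bpow {d p : ℕ} (β : Fin p → ℝ) (hβ0 : ∀ i, 0 ≤ β i)
    (hB : Bconst d p β ≠ ⊤) (σ : Fin p → Fin p) (hσ : ∀ i, σ i ≠ i) :
    ∫⁻ x : Fin p → EuclideanSpace ℝ (Fin d),
        (∏ i, Hf (β i) ‖x i - x (σ i)‖) * ∏ i, Wf (x i)
      ≤ Bconst d p β ^ p := by
  have hv : (volume : Measure (Fin p → EuclideanSpace ℝ (Fin d)))
      = Measure.pi fun _ => volume := volume_pi
  rw [hv, lintegral_eq_lmarginal_univ (fun _ => 0)]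
  have := marg_le β hβ0 hB σ hσ p Finset.univ Finset.univ
    (by simp) (subset_refl _) (fun _ => 0)
  exact this

/-- If a measurable `F` satisfies the factorized nearest neighbor bound
`|F(x)| ≤ K ∏ᵢ ⟨xᵢ⟩^k ∏ᵢ (min_{j≠i}|xᵢ−xⱼ|)^{-βᵢ}` on `Conf_p`, with `βᵢ ∈ [0,d/2)`,
then there is `C > 0` such that for every measurable `f` whose weighted sup
`sup_x ⟨x⟩^{p(k+d+1)} |f(x)|` is bounded by `S`, one has
`∫_{Conf_p} |f| |F| ≤ C · S`.  Here `⟨x⟩` for `x ∈ ℝ^{pd}` is `(1 + ∑ᵢ |xᵢ|²)^{1/2}`. -/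
theorem stmt9 (d p k : ℕ) (hd : 0 < d) (hp : 2 ≤ p) (K : ℝ) (hK : 0 < K)
    (β : Fin p → ℝ) (hβ0 : ∀ i, 0 ≤ β i) (hβ : ∀ i, β i < (d : ℝ) / 2)
    (F : (Fin p → EuclideanSpace ℝ (Fin d)) → ℝ) (hFm : Measurable F)
    (hF : ∀ x : Fin p → EuclideanSpace ℝ (Fin d), Function.Injective x →
      |F x| ≤ K * (∏ i, jb (x i) ^ (k : ℝ)) * ∏ i, nnd x i ^ (-(β i))) :
    ∃ C : ℝ, 0 < C ∧
      ∀ (f : (Fin p → EuclideanSpace ℝ (Fin d)) → ℝ) (S : ℝ), Measurable f →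
        (∀ x : Fin p → EuclideanSpace ℝ (Fin d),
          ((1 + ∑ i, ‖x i‖ ^ 2) ^ ((1 : ℝ) / 2)) ^ ((p * (k + d + 1) : ℕ) : ℝ) * |f x| ≤ S) →
        (∫⁻ x in {x : Fin p → EuclideanSpace ℝ (Fin d) | Function.Injective x},
          ENNReal.ofReal (|f x| * |F x|)) ≤ ENNReal.ofReal (C * S) := by
  classical
  have hB : Bconst d p β ≠ ⊤ := by
    unfold Bconst
    refine ENNReal.add_ne_top.mpr ⟨?_, ?_⟩
    · exact ENNReal.mul_ne_top (by simp) (Mconst_lt_top d).ne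
    · exact (ENNReal.sum_lt_top.mpr (fun i _ => ISconst_lt_top d hd
        (by linarith [hβ0 i]) (by have := hβ i; linarith))).ne
  set Pi2 : Finset ((i : Fin p) → i ∈ Finset.univ → Fin p) :=
    Finset.univ.pi (fun i : Fin p => Finset.univ.erase i) with hPi2
  set T : ℝ≥0∞ := (Pi2.card : ℝ≥0∞) * Bconst d p β ^ p with hTdef
  have hT : T ≠ ⊤ := ENNReal.mul_ne_top (ENNReal.natCast_ne_top _) (ENNReal.pow_ne_top hB)
  refine ⟨K * (T.toReal + 1), by positivity, ?_⟩
  intro f S hfm hfS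
  have hS0 : 0 ≤ S := le_trans (by positivity) (hfS 0)
  -- the ENNReal majorant
  set G : (Fin p → EuclideanSpace ℝ (Fin d)) → ℝ≥0∞ := fun x =>
    (∏ i, ∑ j ∈ Finset.univ.erase i, Hf (β i) ‖x i - x j‖) * ∏ i, Wf (x i) with hG
  -- measurability of the injectivity set
  have hinjset : MeasurableSet {x : Fin p → EuclideanSpace ℝ (Fin d) | Function.Injective x} := by
    have heq : {x : Fin p → EuclideanSpace ℝ (Fin d) | Function.Injective x}
        = ⋂ (i : Fin p), ⋂ (j : Fin p), ⋂ (_ : i ≠ j),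
            {x : Fin p → EuclideanSpace ℝ (Fin d) | x i = x j}ᶜ := by
      ext x
      simp only [Set.mem_setOf_eq, Set.mem_iInter, Set.mem_compl_iff]
      constructor
      · intro hinj i j hij hx
        exact hij (hinj hx)
      · intro h a b hab
        by_contra hne
        exact h a b hne hab
    rw [heq]
    refine MeasurableSet.iInter fun i => MeasurableSet.iInter fun j =>
      MeasurableSet.iInter fun _ => ?_
    exact (measurableSet_eq_fun (measurable_pi_apply i) (measurable_pi_apply j)).compl
  -- pointwise bound on the injectivity set
  have hpoint : ∀ x ∈ {x : Fin p → EuclideanSpace ℝ (Fin d) | Function.Injective x},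
      ENNReal.ofReal (|f x| * |F x|)
        ≤ (ENNReal.ofReal S * ENNReal.ofReal K) * G x := by
    intro x hxinj
    set nx : ℝ := (1 + ∑ i, ‖x i‖ ^ 2) ^ ((1 : ℝ) / 2) with hnx
    have hsumnn : (0:ℝ) ≤ ∑ i, ‖x i‖ ^ 2 :=
      Finset.sum_nonneg fun i _ => sq_nonneg ‖x i‖
    have hnx1 : (1:ℝ) ≤ nx := Real.one_le_rpow (by linarith) (by norm_num)
    have hnx0 : (0:ℝ) < nx := lt_of_lt_of_le one_pos hnx1
    have hjble : ∀ i, jb (x i) ≤ nx := by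
      intro i
      unfold jb
      refine Real.rpow_le_rpow (by positivity) ?_ (by norm_num)
      have : ‖x i‖^2 ≤ ∑ j, ‖x j‖^2 :=
        Finset.single_le_sum (fun j _ => sq_nonneg ‖x j‖) (Finset.mem_univ i)
      linarith
    -- nnd facts
    have hnndpos : ∀ i, 0 < nnd x i ∧ nnd x i ^ (-(β i))
        ≤ ∑ j ∈ Finset.univ.erase i,
            (if ‖x i - x j‖ ≤ 1 then ‖x i - x j‖ ^ (-(β i)) else 1) := by
      intro i
      have hfin : {r : ℝ | ∃ j : Fin p, j ≠ i ∧ r = ‖x i - x j‖}.Finite := by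
        have heq : {r : ℝ | ∃ j : Fin p, j ≠ i ∧ r = ‖x i - x j‖}
            = (fun j => ‖x i - x j‖) '' {j | j ≠ i} := by
          ext r
          simp only [Set.mem_setOf_eq, Set.mem_image]
          exact exists_congr fun j => and_congr_right fun _ => eq_comm
        rw [heq]
        exact (Set.toFinite _).image _
      have hne : {r : ℝ | ∃ j : Fin p, j ≠ i ∧ r = ‖x i - x j‖}.Nonempty := by
        haveI : Nontrivial (Fin p) :=
          ⟨⟨⟨0, by omega⟩, ⟨1, by omega⟩, by simp [Fin.ext_iff]⟩⟩
        obtain ⟨j, hj⟩ := exists_ne i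
        exact ⟨‖x i - x j‖, j, hj, rfl⟩
      have hmem : nnd x i ∈ {r : ℝ | ∃ j : Fin p, j ≠ i ∧ r = ‖x i - x j‖} :=
        hne.csInf_mem hfin
      obtain ⟨j₀, hj₀, hr⟩ := hmem
      have hxne : x i ≠ x j₀ := fun h => hj₀ ((hxinj h).symm)
      have hpos : 0 < nnd x i := by
        rw [hr]
        exact norm_sub_pos_iff.mpr hxne
      refine ⟨hpos, ?_⟩
      have hkey : nnd x i ^ (-(β i))
          ≤ (if ‖x i - x j₀‖ ≤ 1 then ‖x i - x j₀‖ ^ (-(β i)) else 1) := by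
        rw [hr]
        split_ifs with h
        · exact le_rfl
        · exact Real.rpow_le_one_of_one_le_of_nonpos (not_le.mp h).le
            (neg_nonpos.mpr (hβ0 i))
      refine hkey.trans ?_
      refine Finset.single_le_sum (f := fun j =>
        (if ‖x i - x j‖ ≤ 1 then ‖x i - x j‖ ^ (-(β i)) else 1)) (fun j _ => ?_)
        (Finset.mem_erase.mpr ⟨hj₀, Finset.mem_univ j₀⟩)
      split_ifs with h
      · exact Real.rpow_nonneg (norm_nonneg _) _
      · exact zero_le_one
    have hnnd0 : ∀ i, (0:ℝ) ≤ nnd x i ^ (-(β i)) :=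
      fun i => Real.rpow_nonneg (hnndpos i).1.le _
    -- the real-number chain
    set N : ℕ := p * (k + d + 1) with hN
    have hfb : |f x| ≤ nx ^ (-(N:ℝ)) * S := by
      have h1 : |f x| = nx ^ (-(N:ℝ)) * (nx ^ ((N:ℕ):ℝ) * |f x|) := by
        rw [← mul_assoc, ← Real.rpow_add hnx0]
        simp
      rw [h1]
      exact mul_le_mul_of_nonneg_left (hfS x) (Real.rpow_nonneg hnx0.le _)
    have hprodjb : nx ^ (-(N:ℝ)) * ∏ i, jb (x i) ^ (k:ℝ)
        ≤ ∏ i, jb (x i) ^ (-((d:ℝ)+1)) := by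
      have hsplit : ∀ i : Fin p, jb (x i) ^ (k:ℝ)
          = jb (x i) ^ ((k:ℝ) + (d:ℝ) + 1) * jb (x i) ^ (-((d:ℝ)+1)) := by
        intro i
        rw [← Real.rpow_add (jb_pos _)]
        congr 1
        ring
      have hclaim : ∏ i, jb (x i) ^ ((k:ℝ) + (d:ℝ) + 1) ≤ nx ^ ((N:ℕ):ℝ) := by
        have h1 : ∏ i, jb (x i) ^ ((k:ℝ) + (d:ℝ) + 1)
            ≤ ∏ _i : Fin p, nx ^ ((k:ℝ) + (d:ℝ) + 1) := by
          refine Finset.prod_le_prod (fun i _ => Real.rpow_nonneg (jb_pos _).le _)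
            (fun i _ => Real.rpow_le_rpow (jb_pos _).le (hjble i) (by positivity))
        refine h1.trans (le_of_eq ?_)
        rw [Finset.prod_const, Finset.card_univ, Fintype.card_fin,
          ← Real.rpow_natCast (nx ^ ((k:ℝ) + (d:ℝ) + 1)) p, ← Real.rpow_mul hnx0.le]
        congr 1
        rw [hN]
        push_cast
        ring
      calc nx ^ (-(N:ℝ)) * ∏ i, jb (x i) ^ (k:ℝ)
          = nx ^ (-(N:ℝ)) * ((∏ i, jb (x i) ^ ((k:ℝ) + (d:ℝ) + 1))
              * ∏ i, jb (x i) ^ (-((d:ℝ)+1))) := by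
            rw [← Finset.prod_mul_distrib]
            congr 1
            exact Finset.prod_congr rfl fun i _ => hsplit i
        _ ≤ nx ^ (-(N:ℝ)) * (nx ^ ((N:ℕ):ℝ) * ∏ i, jb (x i) ^ (-((d:ℝ)+1))) := by
            refine mul_le_mul_of_nonneg_left ?_ (Real.rpow_nonneg hnx0.le _)
            exact mul_le_mul_of_nonneg_right hclaim
              (Finset.prod_nonneg fun i _ => Real.rpow_nonneg (jb_pos _).le _)
        _ = ∏ i, jb (x i) ^ (-((d:ℝ)+1)) := by
            rw [← mul_assoc, ← Real.rpow_add hnx0]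
            simp
    have hreal : |f x| * |F x|
        ≤ S * K * ∏ i, (jb (x i) ^ (-((d:ℝ)+1)) * nnd x i ^ (-(β i))) := by
      have h1 : |f x| * |F x| ≤ (nx ^ (-(N:ℝ)) * S)
          * (K * (∏ i, jb (x i) ^ (k:ℝ)) * ∏ i, nnd x i ^ (-(β i))) :=
        mul_le_mul hfb (hF x hxinj) (abs_nonneg _)
          (by positivity)
      refine h1.trans ?_
      have h2 : (nx ^ (-(N:ℝ)) * S) * (K * (∏ i, jb (x i) ^ (k:ℝ))
            * ∏ i, nnd x i ^ (-(β i)))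
          = S * K * ((nx ^ (-(N:ℝ)) * ∏ i, jb (x i) ^ (k:ℝ))
            * ∏ i, nnd x i ^ (-(β i))) := by ring
      rw [h2, Finset.prod_mul_distrib]
      refine mul_le_mul_of_nonneg_left ?_ (mul_nonneg hS0 hK.le)
      refine mul_le_mul_of_nonneg_right hprodjb
        (Finset.prod_nonneg fun i _ => hnnd0 i)
    -- pass to ℝ≥0∞
    calc ENNReal.ofReal (|f x| * |F x|)
        ≤ ENNReal.ofReal (S * K
            * ∏ i, (jb (x i) ^ (-((d:ℝ)+1)) * nnd x i ^ (-(β i)))) :=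
          ENNReal.ofReal_le_ofReal hreal
      _ = ENNReal.ofReal S * ENNReal.ofReal K
            * ∏ i, (Wf (x i) * ENNReal.ofReal (nnd x i ^ (-(β i)))) := by
          rw [ENNReal.ofReal_mul (mul_nonneg hS0 hK.le), ENNReal.ofReal_mul hS0,
            ENNReal.ofReal_prod_of_nonneg (fun i _ =>
              mul_nonneg (Real.rpow_nonneg (jb_pos _).le _) (hnnd0 i))]
          congr 1
          refine Finset.prod_congr rfl fun i _ => ?_
          rw [ENNReal.ofReal_mul (Real.rpow_nonneg (jb_pos _).le _)]
          rfl
      _ ≤ ENNReal.ofReal S * ENNReal.ofReal K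
            * ∏ i, (Wf (x i) * ∑ j ∈ Finset.univ.erase i, Hf (β i) ‖x i - x j‖) := by
          refine mul_le_mul_right ?_ _
          refine Finset.prod_le_prod' fun i _ => ?_
          refine mul_le_mul_right ?_ _
          calc ENNReal.ofReal (nnd x i ^ (-(β i)))
              ≤ ENNReal.ofReal (∑ j ∈ Finset.univ.erase i,
                  (if ‖x i - x j‖ ≤ 1 then ‖x i - x j‖ ^ (-(β i)) else 1)) :=
                ENNReal.ofReal_le_ofReal (hnndpos i).2
            _ = ∑ j ∈ Finset.univ.erase i, Hf (β i) ‖x i - x j‖ := by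
                rw [ENNReal.ofReal_sum_of_nonneg (fun j _ => by
                  split_ifs with h
                  · exact Real.rpow_nonneg (norm_nonneg _) _
                  · exact zero_le_one)]
                rfl
      _ = (ENNReal.ofReal S * ENNReal.ofReal K) * G x := by
          show _ = _ * ((∏ i, ∑ j ∈ Finset.univ.erase i, Hf (β i) ‖x i - x j‖)
            * ∏ i, Wf (x i))
          rw [Finset.prod_mul_distrib]
          ring
  -- integrate
  have hGmeas : Measurable G := by
    rw [hG]
    refine Measurable.mul ?_ ?_
    · refine Finset.measurable_prod _ fun i _ => ?_
      refine Finset.measurable_sum _ fun j _ => ?_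
      exact (measurable_Hf (β i)).comp
        (((measurable_pi_apply i).sub (measurable_pi_apply j)).norm)
    · exact Finset.measurable_prod _ fun i _ => measurable_Wf.comp (measurable_pi_apply i)
  have hGint : ∫⁻ x, G x ≤ T := by
    have hexpand : ∀ x : Fin p → EuclideanSpace ℝ (Fin d), G x
        = ∑ σ ∈ Pi2, (∏ i ∈ Finset.univ.attach,
            Hf (β i.1) ‖x i.1 - x (σ i.1 i.2)‖) * ∏ i, Wf (x i) := by
      intro x
      show (∏ i, ∑ j ∈ Finset.univ.erase i, Hf (β i) ‖x i - x j‖) * ∏ i, Wf (x i) = _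
      rw [Finset.prod_sum, Finset.sum_mul]
    calc ∫⁻ x, G x
        = ∑ σ ∈ Pi2, ∫⁻ x : Fin p → EuclideanSpace ℝ (Fin d),
            (∏ i ∈ Finset.univ.attach, Hf (β i.1) ‖x i.1 - x (σ i.1 i.2)‖)
              * ∏ i, Wf (x i) := by
          rw [lintegral_congr hexpand]
          refine lintegral_finset_sum' _ fun σ _ => ?_
          refine Measurable.aemeasurable (Measurable.mul ?_ ?_)
          · refine Finset.measurable_prod _ fun i _ => ?_
            exact (measurable_Hf (β i.1)).comp
              (((measurable_pi_apply i.1).sub (measurable_pi_apply (σ i.1 i.2))).norm)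
          · exact Finset.measurable_prod _ fun i _ =>
              measurable_Wf.comp (measurable_pi_apply i)
      _ ≤ ∑ _σ ∈ Pi2, Bconst d p β ^ p := by
          refine Finset.sum_le_sum fun σ hσmem => ?_
          set τ : Fin p → Fin p := fun i => σ i (Finset.mem_univ i) with hτ
          have hτne : ∀ i, τ i ≠ i := by
            intro i
            have := (Finset.mem_pi.mp hσmem) i (Finset.mem_univ i)
            exact (Finset.mem_erase.mp this).1
          have hconv : ∀ x : Fin p → EuclideanSpace ℝ (Fin d),
              (∏ i ∈ Finset.univ.attach, Hf (β i.1) ‖x i.1 - x (σ i.1 i.2)‖)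
                = ∏ i, Hf (β i) ‖x i - x (τ i)‖ := by
            intro x
            exact Finset.prod_attach Finset.univ
              (fun i => Hf (β i) ‖x i - x (τ i)‖)
          calc ∫⁻ x : Fin p → EuclideanSpace ℝ (Fin d),
                (∏ i ∈ Finset.univ.attach, Hf (β i.1) ‖x i.1 - x (σ i.1 i.2)‖)
                  * ∏ i, Wf (x i)
              = ∫⁻ x : Fin p → EuclideanSpace ℝ (Fin d),
                (∏ i, Hf (β i) ‖x i - x (τ i)‖) * ∏ i, Wf (x i) := by
                refine lintegral_congr fun x => ?_
                rw [hconv x]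
            _ ≤ Bconst d p β ^ p := int_le_Bpow β hβ0 hB τ hτne
      _ = T := by
          rw [Finset.sum_const, hTdef, nsmul_eq_mul]
  -- final computation
  calc ∫⁻ x in {x : Fin p → EuclideanSpace ℝ (Fin d) | Function.Injective x},
        ENNReal.ofReal (|f x| * |F x|)
      ≤ ∫⁻ x in {x : Fin p → EuclideanSpace ℝ (Fin d) | Function.Injective x},
        (ENNReal.ofReal S * ENNReal.ofReal K) * G x := setLIntegral_mono' hinjset hpoint
    _ ≤ ∫⁻ x, (ENNReal.ofReal S * ENNReal.ofReal K) * G x :=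
        lintegral_mono' Measure.restrict_le_self le_rfl
    _ = (ENNReal.ofReal S * ENNReal.ofReal K) * ∫⁻ x, G x :=
        lintegral_const_mul' _ _ (ENNReal.mul_ne_top ENNReal.ofReal_ne_top
          ENNReal.ofReal_ne_top)
    _ ≤ (ENNReal.ofReal S * ENNReal.ofReal K) * T := mul_le_mul_right hGint _
    _ ≤ ENNReal.ofReal (K * (T.toReal + 1) * S) := by
        rw [ENNReal.ofReal_mul (by positivity), ENNReal.ofReal_mul hK.le]
        have hTle : T ≤ ENNReal.ofReal (T.toReal + 1) := by
          conv_lhs => rw [← ENNReal.ofReal_toReal hT]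
          exact ENNReal.ofReal_le_ofReal (by linarith)
        calc ENNReal.ofReal S * ENNReal.ofReal K * T
            ≤ ENNReal.ofReal S * ENNReal.ofReal K * ENNReal.ofReal (T.toReal + 1) :=
              mul_le_mul_right hTle _
          _ = ENNReal.ofReal K * ENNReal.ofReal (T.toReal + 1) * ENNReal.ofReal S := by
              ring
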